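/- arXiv:2303.01790 — 2 statements merged into one kernel-verified Lean document; each statement's English description precedes it below -/
import Mathlib

section
/- Let d ≥ 1 and let θ_1, …, θ_d be real numbers with (1/d)·Σ_{k=1}^d θ_k = α. For each positive integer m set p_m(x) := ∏_{k=1}^d (x − e^{θ_k/m}). Then for every k ∈ {0,1,…,d}, lim_{m→∞} ã_k(p_m)^m = e^{αk}; equivalently, the polynomials p_m^{⊠_d m} converge coefficientwise to (x − e^α)^d as m → ∞. -/
open Finset Filter


/-- For `p(x) = Σ_{i=0}^d a_i x^{d-i}`, `atilde d p i = (-1)^i * (d.choose i)⁻¹ * a_i`. -/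
noncomputable def atilde (d : ℕ) (p : Polynomial ℂ) (i : ℕ) : ℂ :=
  (-1) ^ i * ((d.choose i : ℂ))⁻¹ * p.coeff (d - i)

/-- Finite free multiplicative convolution of degree-`d` polynomials. -/
noncomputable def ffmul (d : ℕ) (p q : Polynomial ℂ) : Polynomial ℂ :=
  ∑ i ∈ Finset.range (d + 1),
    Polynomial.C ((-1) ^ i * (d.choose i : ℂ) * atilde d p i * atilde d q i) *
      Polynomial.X ^ (d - i)

/-- The `m`-fold finite free multiplicative convolution power `p^{⊠_d m}`;
the empty convolution is the identity `(x-1)^d` for `⊠_d`. -/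
noncomputable def ffpow (d : ℕ) (p : Polynomial ℂ) : ℕ → Polynomial ℂ
  | 0 => (Polynomial.X - 1) ^ d
  | m + 1 => ffmul d (ffpow d p m) p


noncomputable def Lfun : ℝ → ℝ := fun x => if x = 0 then 1 else Real.log (1 + x) / x
noncomputable def Efun : ℝ → ℝ := fun x => if x = 0 then 1 else (Real.exp x - 1) / x

lemma tendsto_Lfun : Tendsto Lfun (nhds 0) (nhds 1) := by
  rw [← nhdsNE_sup_pure (0 : ℝ), tendsto_sup]
  constructor
  · have hd : HasDerivAt (fun x : ℝ => Real.log (1 + x)) 1 0 := by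
      simpa using ((hasDerivAt_id (0:ℝ)).const_add 1).log (by norm_num)
    have := hasDerivAt_iff_tendsto_slope.1 hd
    refine this.congr' ?_
    filter_upwards [self_mem_nhdsWithin] with x hx
    have hx : x ≠ 0 := hx
    simp [slope_fun_def, Lfun, hx, Real.log_one, div_eq_inv_mul]
  · have h1 : Lfun 0 = 1 := if_pos rfl
    exact h1 ▸ tendsto_pure_nhds Lfun 0

lemma tendsto_Efun : Tendsto Efun (nhds 0) (nhds 1) := by
  rw [← nhdsNE_sup_pure (0 : ℝ), tendsto_sup]
  constructor
  · have hd : HasDerivAt Real.exp 1 0 := by simpa using Real.hasDerivAt_exp 0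
    have := hasDerivAt_iff_tendsto_slope.1 hd
    refine this.congr' ?_
    filter_upwards [self_mem_nhdsWithin] with x hx
    have hx : x ≠ 0 := hx
    simp [slope_fun_def, Efun, hx, Real.exp_zero, div_eq_inv_mul]
  · have h1 : Efun 0 = 1 := if_pos rfl
    exact h1 ▸ tendsto_pure_nhds Efun 0

lemma tendsto_mul_exp_div (c : ℝ) :
    Tendsto (fun m : ℕ => (m : ℝ) * (Real.exp (c / m) - 1)) atTop (nhds c) := by
  have h0 : Tendsto (fun m : ℕ => c / (m : ℝ)) atTop (nhds 0) :=
    tendsto_const_div_atTop_nhds_zero_nat c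
  have h1 : Tendsto (fun m : ℕ => c * Efun (c / m)) atTop (nhds c) := by
    have := (tendsto_Efun.comp h0).const_mul c
    simpa using this
  refine h1.congr' ?_
  filter_upwards [eventually_ge_atTop 1] with m hm
  have hm' : (m : ℝ) ≠ 0 := by positivity
  by_cases hc : c = 0
  · simp [hc, Efun]
  · have hcm : c / (m : ℝ) ≠ 0 := div_ne_zero hc hm'
    simp only [Efun, hcm, if_neg, if_false]
    field_simp

lemma key {ι : Type*} [DecidableEq ι] (t : Finset ι) (ht : t.Nonempty) (s : ι → ℝ) :
    Tendsto (fun m : ℕ => ((∑ i ∈ t, Real.exp (s i / m)) / (t.card : ℝ)) ^ m) atTop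
      (nhds (Real.exp ((∑ i ∈ t, s i) / (t.card : ℝ)))) := by
  set N : ℝ := (t.card : ℝ) with hN
  have hN0 : (0:ℝ) < N := by
    exact_mod_cast Nat.cast_pos.2 (Finset.card_pos.2 ht)
  set f : ℕ → ℝ := fun m => (∑ i ∈ t, Real.exp (s i / m)) / N with hf
  have hfpos : ∀ m, 0 < f m := by
    intro m
    apply div_pos _ hN0
    exact Finset.sum_pos (fun i _ => Real.exp_pos _) ht
  -- f m → 1
  have hf1 : Tendsto f atTop (nhds 1) := by
    have hsum : Tendsto (fun m : ℕ => ∑ i ∈ t, Real.exp (s i / m)) atTop (nhds N) := by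
      have : Tendsto (fun m : ℕ => ∑ i ∈ t, Real.exp (s i / m)) atTop
          (nhds (∑ _i ∈ t, (1:ℝ))) := by
        apply tendsto_finset_sum
        intro i _
        have := Real.continuous_exp.continuousAt.tendsto.comp
          (tendsto_const_div_atTop_nhds_zero_nat (s i))
        simpa [Function.comp_def] using this
      simpa [hN] using this
    have := hsum.div_const N
    simpa [hf, div_self hN0.ne'] using this
  -- m * (f m - 1) → (∑ s i) / N
  have hme : Tendsto (fun m : ℕ => (m : ℝ) * (f m - 1)) atTop (nhds ((∑ i ∈ t, s i) / N)) := by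
    have h1 : Tendsto (fun m : ℕ => (∑ i ∈ t, (m : ℝ) * (Real.exp (s i / m) - 1)) / N) atTop
        (nhds ((∑ i ∈ t, s i) / N)) := by
      exact (tendsto_finset_sum _ (fun i _ => tendsto_mul_exp_div (s i))).div_const N
    refine h1.congr ?_
    intro m
    have hfm : f m - 1 = (∑ i ∈ t, (Real.exp (s i / m) - 1)) / N := by
      rw [hf, Finset.sum_sub_distrib]
      field_simp
      simp [hN]
    rw [hfm, ← mul_div_assoc, Finset.mul_sum]
  -- m * log (f m) → (∑ s i) / N
  have hlog : Tendsto (fun m : ℕ => (m : ℝ) * Real.log (f m)) atTop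
      (nhds ((∑ i ∈ t, s i) / N)) := by
    have hL : Tendsto (fun m : ℕ => Lfun (f m - 1) * ((m : ℝ) * (f m - 1))) atTop
        (nhds (1 * ((∑ i ∈ t, s i) / N))) := by
      apply Tendsto.mul _ hme
      exact tendsto_Lfun.comp (by simpa using hf1.sub_const 1)
    rw [one_mul] at hL
    refine hL.congr ?_
    intro m
    by_cases h : f m - 1 = 0
    · have : f m = 1 := by linarith [sub_eq_zero.1 h]
      simp [h, this]
    · simp only [Lfun, h, if_neg, if_false]
      have h1 : (1 : ℝ) + (f m - 1) = f m := by ring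
      rw [h1]
      field_simp
  -- conclude
  have := Real.continuous_exp.continuousAt.tendsto.comp hlog
  refine this.congr ?_
  intro m
  simp only [Function.comp]
  rw [Real.exp_nat_mul, Real.exp_log (hfpos m)]

lemma count_mem {ι : Type*} [DecidableEq ι] (u : Finset ι) {k : ℕ} (hk : 1 ≤ k) {j : ι}
    (hj : j ∈ u) :
    ((u.powersetCard k).filter (fun S => j ∈ S)).card = (u.card - 1).choose (k - 1) := by
  rw [← Finset.card_erase_of_mem hj, ← Finset.card_powersetCard (k - 1) (u.erase j)]
  apply Finset.card_nbij' (fun S => S.erase j) (fun T => insert j T)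
  · intro S hS
    simp only [Finset.mem_coe, Finset.mem_filter, Finset.mem_powersetCard] at hS
    obtain ⟨⟨hSu, hSc⟩, hjS⟩ := hS
    rw [Finset.mem_coe, Finset.mem_powersetCard]
    exact ⟨Finset.erase_subset_erase j hSu, by rw [Finset.card_erase_of_mem hjS, hSc]⟩
  · intro T hT
    rw [Finset.mem_coe, Finset.mem_powersetCard] at hT
    obtain ⟨hTu, hTc⟩ := hT
    have hjT : j ∉ T := fun h => (Finset.mem_erase.1 (hTu h)).1 rfl
    simp only [Finset.mem_coe, Finset.mem_filter, Finset.mem_powersetCard]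
    refine ⟨⟨?_, ?_⟩, Finset.mem_insert_self j T⟩
    · intro x hx
      rcases Finset.mem_insert.1 hx with rfl | hx
      · exact hj
      · exact Finset.mem_of_mem_erase (hTu hx)
    · rw [Finset.card_insert_of_notMem hjT, hTc]
      omega
  · intro S hS
    simp only [Finset.mem_coe, Finset.mem_filter] at hS
    exact Finset.insert_erase hS.2
  · intro T hT
    rw [Finset.mem_coe, Finset.mem_powersetCard] at hT
    have hjT : j ∉ T := fun h => (Finset.mem_erase.1 (hT.1 h)).1 rfl
    exact Finset.erase_insert hjT

lemma sum_powersetCard_sum {ι : Type*} [DecidableEq ι] (u : Finset ι) {k : ℕ} (hk : 1 ≤ k)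
    (g : ι → ℝ) :
    ∑ S ∈ u.powersetCard k, ∑ j ∈ S, g j
      = ((u.card - 1).choose (k - 1) : ℝ) * ∑ j ∈ u, g j := by
  have h1 : ∀ S ∈ u.powersetCard k, ∑ j ∈ S, g j = ∑ j ∈ u, if j ∈ S then g j else 0 := by
    intro S hS
    rw [Finset.mem_powersetCard] at hS
    rw [← Finset.sum_filter]
    congr 1
    rw [Finset.filter_mem_eq_inter, Finset.inter_eq_right.2 hS.1]
  rw [Finset.sum_congr rfl h1, Finset.sum_comm, Finset.mul_sum]
  apply Finset.sum_congr rfl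
  intro j hj
  rw [← Finset.sum_filter, Finset.sum_const, count_mem u hk hj, nsmul_eq_mul]

open Polynomial in
lemma prod_X_sub_C_coeff' {ι : Type*} (u : Finset ι) (a : ι → ℂ) {k : ℕ} (hk : k ≤ u.card) :
    (∏ i ∈ u, (X - C (a i))).coeff (u.card - k)
      = (-1) ^ k * ∑ S ∈ u.powersetCard k, ∏ i ∈ S, a i := by
  have h1 : ∀ i ∈ u, (X - C (a i)) = X + C (-a i) := by
    intro i _; rw [map_neg, sub_eq_add_neg]
  rw [Finset.prod_congr rfl h1, Finset.prod_X_add_C_coeff _ _ (Nat.sub_le _ _),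
    Nat.sub_sub_self hk, Finset.mul_sum]
  apply Finset.sum_congr rfl
  intro S hS
  have hScard : S.card = k := (Finset.mem_powersetCard.1 hS).2
  calc ∏ i ∈ S, -a i = (∏ _i ∈ S, (-1 : ℂ)) * ∏ i ∈ S, a i := by
        rw [← Finset.prod_mul_distrib]; simp
    _ = (-1) ^ k * ∏ i ∈ S, a i := by rw [Finset.prod_const, hScard]

open Polynomial in
lemma coeff_sumform (d : ℕ) (c : ℕ → ℂ) (j : ℕ) :
    (∑ i ∈ Finset.range (d + 1), C (c i) * X ^ (d - i)).coeff j
      = if j ≤ d then c (d - j) else 0 := by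
  rw [Polynomial.finset_sum_coeff]
  simp only [Polynomial.coeff_C_mul, Polynomial.coeff_X_pow]
  by_cases hj : j ≤ d
  · rw [if_pos hj, Finset.sum_eq_single (d - j)]
    · simp [Nat.sub_sub_self hj]
    · intro i hi hne
      rw [Finset.mem_range, Nat.lt_succ_iff] at hi
      have : ¬ (j = d - i) := by omega
      simp [this]
    · intro h
      exact absurd (Finset.mem_range.2 (by omega)) h
  · rw [if_neg hj]
    apply Finset.sum_eq_zero
    intro i _
    have : ¬ (j = d - i) := by omega
    simp [this]

lemma atilde_sumform (d : ℕ) (c : ℕ → ℂ) {i : ℕ} (hi : i ≤ d) :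
    atilde d (∑ i ∈ Finset.range (d + 1), Polynomial.C (c i) * Polynomial.X ^ (d - i)) i
      = (-1) ^ i * ((d.choose i : ℂ))⁻¹ * c i := by
  rw [atilde, coeff_sumform, if_pos (Nat.sub_le d i), Nat.sub_sub_self hi]

lemma cancel_aux (i : ℕ) {c : ℂ} (hC : c ≠ 0) (x : ℂ) :
    (-1) ^ i * c⁻¹ * ((-1) ^ i * c * x) = x := by
  rw [show ((-1 : ℂ)) ^ i * c⁻¹ * ((-1) ^ i * c * x) = ((-1) * (-1)) ^ i * (c⁻¹ * c) * x from by
    rw [mul_pow]; ring]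
  rw [inv_mul_cancel₀ hC]
  norm_num

lemma ffpow_eq (d : ℕ) (p : Polynomial ℂ) (m : ℕ) :
    ffpow d p m = ∑ i ∈ Finset.range (d + 1),
      Polynomial.C ((-1) ^ i * (d.choose i : ℂ) * atilde d p i ^ m) * Polynomial.X ^ (d - i) := by
  induction m with
  | zero =>
    show (Polynomial.X - 1) ^ d = _
    ext j
    rw [coeff_sumform]
    have h1 : (Polynomial.X - 1 : Polynomial ℂ) = Polynomial.X + Polynomial.C (-1) := by
      rw [map_neg, map_one, sub_eq_add_neg]
    rw [h1, Polynomial.coeff_X_add_C_pow]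
    by_cases hj : j ≤ d
    · rw [if_pos hj, pow_zero, mul_one, Nat.choose_symm hj]
    · rw [if_neg hj, Nat.choose_eq_zero_of_lt (lt_of_not_ge hj)]
      simp
  | succ m ih =>
    show ffmul d (ffpow d p m) p = _
    rw [ffmul]
    apply Finset.sum_congr rfl
    intro i hi
    rw [Finset.mem_range, Nat.lt_succ_iff] at hi
    have hC : ((d.choose i : ℂ)) ≠ 0 :=
      Nat.cast_ne_zero.2 (Nat.choose_pos hi).ne'
    have hat : atilde d (ffpow d p m) i = atilde d p i ^ m := by
      rw [ih, atilde_sumform d _ hi, cancel_aux i hC]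
    rw [hat]
    congr 1
    rw [pow_succ]
    ring

lemma atilde_ffpow (d : ℕ) (p : Polynomial ℂ) (m : ℕ) {i : ℕ} (hi : i ≤ d) :
    atilde d (ffpow d p m) i = atilde d p i ^ m := by
  have hC : ((d.choose i : ℂ)) ≠ 0 := Nat.cast_ne_zero.2 (Nat.choose_pos hi).ne'
  rw [ffpow_eq, atilde_sumform d _ hi, cancel_aux i hC]

lemma coeff_ffpow (d : ℕ) (p : Polynomial ℂ) (m j : ℕ) :
    (ffpow d p m).coeff j = if j ≤ d then
      (-1) ^ (d - j) * (d.choose (d - j) : ℂ) * atilde d p (d - j) ^ m else 0 := by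
  rw [ffpow_eq, coeff_sumform]

theorem statement14 (d : ℕ) (hd : 1 ≤ d) (θ : Fin d → ℝ) (α : ℝ)
    (hα : (∑ k, θ k) / (d : ℝ) = α)
    (p : ℕ → Polynomial ℂ)
    (hp : ∀ m, p m = ∏ k, (Polynomial.X -
      Polynomial.C ((Real.exp (θ k / (m : ℝ)) : ℝ) : ℂ))) :
    (∀ k ≤ d, Tendsto (fun m => atilde d (p m) k ^ m) atTop
        (nhds (((Real.exp (α * (k : ℝ)) : ℝ) : ℂ)))) ∧
    (∀ j, Tendsto (fun m => (ffpow d (p m) m).coeff j) atTop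
        (nhds (((Polynomial.X - Polynomial.C ((Real.exp α : ℝ) : ℂ)) ^ d).coeff j))) := by
  have part1 : ∀ k ≤ d, Tendsto (fun m => atilde d (p m) k ^ m) atTop
      (nhds (((Real.exp (α * (k : ℝ)) : ℝ) : ℂ))) := by
    intro k hk
    have hCpos : 0 < d.choose k := Nat.choose_pos hk
    set t : Finset (Finset (Fin d)) := (Finset.univ : Finset (Fin d)).powersetCard k with ht
    have htcard : t.card = d.choose k := by
      rw [ht, Finset.card_powersetCard, Finset.card_univ, Fintype.card_fin]
    have htne : t.Nonempty := Finset.card_pos.1 (by rw [htcard]; exact hCpos)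
    set s : Finset (Fin d) → ℝ := fun S => ∑ j ∈ S, θ j with hs
    -- atilde formula
    have hat : ∀ m : ℕ, atilde d (p m) k
        = ((((∑ S ∈ t, Real.exp (s S / m)) / (t.card : ℝ)) : ℝ) : ℂ) := by
      intro m
      rw [atilde, hp]
      have hcard : (Finset.univ : Finset (Fin d)).card = d := by simp
      have hk' : k ≤ (Finset.univ : Finset (Fin d)).card := by rw [hcard]; exact hk
      have := prod_X_sub_C_coeff' Finset.univ
        (fun j => ((Real.exp (θ j / m) : ℝ) : ℂ)) hk'
      rw [hcard] at this
      rw [this]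
      have hprod : ∀ S ∈ (Finset.univ : Finset (Fin d)).powersetCard k,
          (∏ i ∈ S, ((Real.exp (θ i / m) : ℝ) : ℂ)) = ((Real.exp (s S / m) : ℝ) : ℂ) := by
        intro S _
        rw [← Complex.ofReal_prod, ← Real.exp_sum]
        congr 1
        rw [hs, Finset.sum_div]
      rw [Finset.sum_congr rfl hprod]
      rw [show ((-1 : ℂ)) ^ k * ((d.choose k : ℂ))⁻¹ * ((-1) ^ k *
          ∑ S ∈ (Finset.univ : Finset (Fin d)).powersetCard k, ((Real.exp (s S / m) : ℝ) : ℂ))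
          = ((-1) * (-1)) ^ k * (((d.choose k : ℂ))⁻¹ *
          ∑ S ∈ (Finset.univ : Finset (Fin d)).powersetCard k, ((Real.exp (s S / m) : ℝ) : ℂ))
          from by rw [mul_pow]; ring]
      rw [neg_mul_neg, mul_one, one_pow, one_mul, ← ht, htcard]
      push_cast
      rw [div_eq_inv_mul]
    -- the sum identity
    have heq : (∑ S ∈ t, s S) / (t.card : ℝ) = α * k := by
      have hsS : ∀ S ∈ t, s S = ∑ j ∈ S, θ j := fun S _ => rfl
      rw [Finset.sum_congr rfl hsS, htcard, ht]
      rcases Nat.eq_zero_or_pos k with rfl | hk1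
      · simp [Finset.powersetCard_zero]
      · rw [sum_powersetCard_sum _ hk1 θ, Finset.card_univ, Fintype.card_fin]
        have hnat : d * (d - 1).choose (k - 1) = d.choose k * k := by
          have h := Nat.add_one_mul_choose_eq (d - 1) (k - 1)
          rw [show d - 1 + 1 = d by omega, show k - 1 + 1 = k by omega] at h
          exact h
        have hd0 : (d : ℝ) ≠ 0 := Nat.cast_ne_zero.2 (by omega)
        have hC0 : ((d.choose k : ℝ)) ≠ 0 := Nat.cast_ne_zero.2 hCpos.ne'
        have hnat' : (d : ℝ) * ((d - 1).choose (k - 1) : ℝ) = (d.choose k : ℝ) * k := by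
          exact_mod_cast congrArg (fun n : ℕ => (n : ℝ)) hnat
        have key2 : ((d - 1).choose (k - 1) : ℝ) / (d.choose k : ℝ) = (k : ℝ) / d := by
          rw [div_eq_div_iff hC0 hd0]
          linarith [hnat']
        rw [← hα]
        calc ((d - 1).choose (k - 1) : ℝ) * (∑ j, θ j) / (d.choose k : ℝ)
            = (((d - 1).choose (k - 1) : ℝ) / (d.choose k : ℝ)) * (∑ j, θ j) := by ring
          _ = ((k : ℝ) / d) * (∑ j, θ j) := by rw [key2]
          _ = (∑ j, θ j) / (d : ℝ) * k := by ring
    have hlim := key t htne s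
    rw [heq] at hlim
    have hlim2 : Tendsto (fun m : ℕ =>
        ((((∑ S ∈ t, Real.exp (s S / m)) / (t.card : ℝ)) ^ m : ℝ) : ℂ)) atTop
        (nhds ((Real.exp (α * k) : ℝ) : ℂ)) :=
      (Complex.continuous_ofReal.continuousAt.tendsto).comp hlim
    refine hlim2.congr ?_
    intro m
    rw [hat m, ← Complex.ofReal_pow]
  refine ⟨part1, ?_⟩
  intro j
  by_cases hj : j ≤ d
  · have h1 := part1 (d - j) (Nat.sub_le d j)
    have h2 : Tendsto (fun m => ((-1 : ℂ)) ^ (d - j) * (d.choose (d - j) : ℂ)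
        * atilde d (p m) (d - j) ^ m) atTop
        (nhds ((-1 : ℂ) ^ (d - j) * (d.choose (d - j) : ℂ)
          * ((Real.exp (α * ((d - j : ℕ) : ℝ)) : ℝ) : ℂ))) := by
      exact (h1.const_mul _)
    have htarget : ((Polynomial.X - Polynomial.C ((Real.exp α : ℝ) : ℂ)) ^ d).coeff j
        = (-1 : ℂ) ^ (d - j) * (d.choose (d - j) : ℂ)
          * ((Real.exp (α * ((d - j : ℕ) : ℝ)) : ℝ) : ℂ) := by
      have h1' : (Polynomial.X - Polynomial.C ((Real.exp α : ℝ) : ℂ))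
          = Polynomial.X + Polynomial.C (-((Real.exp α : ℝ) : ℂ)) := by
        rw [map_neg, sub_eq_add_neg]
      rw [h1', Polynomial.coeff_X_add_C_pow, Nat.choose_symm hj, neg_pow]
      rw [show α * ((d - j : ℕ) : ℝ) = ((d - j : ℕ) : ℝ) * α from mul_comm _ _]
      rw [Real.exp_nat_mul]
      push_cast
      ring
    rw [htarget]
    refine h2.congr ?_
    intro m
    rw [coeff_ffpow, if_pos hj]
  · have hzero : ∀ m, (ffpow d (p m) m).coeff j = 0 := by
      intro m
      rw [coeff_ffpow, if_neg hj]
    have htarget : ((Polynomial.X - Polynomial.C ((Real.exp α : ℝ) : ℂ)) ^ d).coeff j = 0 := by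
      have h1' : (Polynomial.X - Polynomial.C ((Real.exp α : ℝ) : ℂ))
          = Polynomial.X + Polynomial.C (-((Real.exp α : ℝ) : ℂ)) := by
        rw [map_neg, sub_eq_add_neg]
      rw [h1', Polynomial.coeff_X_add_C_pow, Nat.choose_eq_zero_of_lt (lt_of_not_ge hj)]
      simp
    rw [htarget]
    refine tendsto_const_nhds.congr ?_
    intro m
    rw [hzero]
end

section
/- Let d ≥ 2 and let θ_1, …, θ_d ∈ [−π,π) be real numbers with Σ_{k=1}^d θ_k = 0 and (1/d)·Σ_{k=1}^d θ_k² = σ². For each positive integer m set p_m(z) := ∏_{k=1}^d (z − e^{iθ_k/√m}). Then for every k ∈ {0,1,…,d}, lim_{m→∞} ã_k(p_m)^m = exp(−k(d−k)σ²/(2(d−1))); equivalently, the polynomials p_m^{⊠_d m} converge coefficientwise to the unitary Hermite polynomial H_d(z; dσ²/(d−1)) as m → ∞, where H_d(z;t) := Σ_{k=0}^d (−1)^k · C(d,k) · exp(−tk(d−k)/(2d)) · z^{d−k} for t ≥ 0. -/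
open Finset Filter

section AuxComb
variable {ι : Type*} [DecidableEq ι]

lemma aux_sum_filter_powersetCard {M : Type*} [AddCommMonoid M]
    (s : Finset ι) {j : ι} (hj : j ∈ s) (k : ℕ) (g : Finset ι → M) :
    ∑ S ∈ (s.powersetCard (k+1)).filter (fun S => j ∈ S), g S
      = ∑ T ∈ (s.erase j).powersetCard k, g (insert j T) := by
  refine Finset.sum_nbij' (fun S => S.erase j) (fun T => insert j T) ?_ ?_ ?_ ?_ ?_
  · intro S hS
    simp only [mem_filter, mem_powersetCard] at hS
    obtain ⟨⟨hsub, hcard⟩, hjS⟩ := hS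
    simp only [mem_powersetCard]
    refine ⟨fun x hx => ?_, by simp [Finset.card_erase_of_mem hjS, hcard]⟩
    simp only [mem_erase] at hx ⊢
    exact ⟨hx.1, hsub hx.2⟩
  · intro T hT
    simp only [mem_powersetCard] at hT
    obtain ⟨hsub, hcard⟩ := hT
    have hjT : j ∉ T := fun h => (Finset.mem_erase.mp (hsub h)).1 rfl
    simp only [mem_filter, mem_powersetCard]
    refine ⟨⟨fun x hx => ?_, by rw [Finset.card_insert_of_notMem hjT, hcard]⟩,
      Finset.mem_insert_self _ _⟩
    rcases Finset.mem_insert.mp hx with rfl | hx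
    · exact hj
    · exact (Finset.erase_subset _ _) (hsub hx)
  · intro S hS
    simp only [mem_filter] at hS
    exact Finset.insert_erase hS.2
  · intro T hT
    simp only [mem_powersetCard] at hT
    have hjT : j ∉ T := fun h => (Finset.mem_erase.mp (hT.1 h)).1 rfl
    exact Finset.erase_insert hjT
  · intro S hS
    simp only [mem_filter] at hS
    rw [Finset.insert_erase hS.2]

lemma aux_card_filter (s : Finset ι) {j : ι} (hj : j ∈ s) (k : ℕ) :
    ((s.powersetCard (k+1)).filter (fun S => j ∈ S)).card = (s.card - 1).choose k := by
  have h := aux_sum_filter_powersetCard s hj k (fun _ => (1 : ℕ))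
  simpa [Finset.card_powersetCard, Finset.card_erase_of_mem hj] using h

lemma aux_sum_powersetCard_sum (s : Finset ι) (k : ℕ) (f : ι → ℝ) :
    ∑ S ∈ s.powersetCard (k+1), ∑ j ∈ S, f j
      = ((s.card - 1).choose k : ℝ) * ∑ j ∈ s, f j := by
  have h1 : ∀ S ∈ s.powersetCard (k+1), ∑ j ∈ S, f j
      = ∑ j ∈ s, if j ∈ S then f j else 0 := by
    intro S hS
    rw [Finset.sum_ite_mem, Finset.inter_eq_right.mpr (Finset.mem_powersetCard.mp hS).1]
  rw [Finset.sum_congr rfl h1, Finset.sum_comm, Finset.mul_sum]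
  refine Finset.sum_congr rfl fun j hj => ?_
  rw [← Finset.sum_filter, Finset.sum_const, aux_card_filter s hj k, nsmul_eq_mul]

lemma aux_sum_powersetCard_sq (s : Finset ι) (k : ℕ) (f : ι → ℝ) (hs : 2 ≤ s.card)
    (hmean : ∑ j ∈ s, f j = 0) :
    ∑ S ∈ s.powersetCard (k+1), (∑ j ∈ S, f j)^2
      = ((s.card - 2).choose k : ℝ) * ∑ j ∈ s, (f j)^2 := by
  have key : ∀ j ∈ s, ∑ S ∈ (s.powersetCard (k+1)).filter (fun S => j ∈ S), (∑ l ∈ S, f l)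
      = ((s.card - 2).choose k : ℝ) * f j := by
    intro j hj
    have herase : ∑ l ∈ s.erase j, f l = - f j := by
      have h := Finset.add_sum_erase s f hj
      rw [hmean] at h
      linarith
    rw [aux_sum_filter_powersetCard s hj k]
    have hins : ∀ T ∈ (s.erase j).powersetCard k, ∑ l ∈ insert j T, f l
        = f j + ∑ l ∈ T, f l := by
      intro T hT
      have hjT : j ∉ T := fun h =>
        (Finset.mem_erase.mp ((Finset.mem_powersetCard.mp hT).1 h)).1 rfl
      rw [Finset.sum_insert hjT]
    rw [Finset.sum_congr rfl hins, Finset.sum_add_distrib, Finset.sum_const,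
      Finset.card_powersetCard, Finset.card_erase_of_mem hj]
    cases k with
    | zero =>
      simp only [Finset.powersetCard_zero, Finset.sum_singleton, Finset.sum_empty, add_zero,
        Nat.choose_zero_right, one_smul, Nat.cast_one, one_mul]
    | succ k' =>
      rw [aux_sum_powersetCard_sum (s.erase j) k' f, herase, Finset.card_erase_of_mem hj]
      have h1 : s.card - 1 = (s.card - 2) + 1 := by omega
      rw [h1, Nat.choose_succ_succ]
      rw [show #s - 2 + 1 - 1 = #s - 2 from rfl]
      push_cast
      ring
  have h1 : ∀ S ∈ s.powersetCard (k+1), (∑ j ∈ S, f j)^2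
      = ∑ j ∈ s, if j ∈ S then f j * ∑ l ∈ S, f l else 0 := by
    intro S hS
    rw [Finset.sum_ite_mem, Finset.inter_eq_right.mpr (Finset.mem_powersetCard.mp hS).1,
      ← Finset.sum_mul, sq]
  rw [Finset.sum_congr rfl h1, Finset.sum_comm, Finset.mul_sum]
  refine Finset.sum_congr rfl fun j hj => ?_
  rw [← Finset.sum_filter, ← Finset.mul_sum, key j hj]
  ring

end AuxComb

lemma aux_choose_id (e k : ℕ) :
    (k+1) * ((e+1) - k) * ((e+2).choose (k+1)) = (e+2) * (e+1) * (e.choose k) := by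
  have h1 := Nat.add_one_mul_choose_eq (e+1) k
  have h2 := Nat.choose_mul_succ_eq e k
  calc (k+1) * ((e+1) - k) * ((e+2).choose (k+1))
      = ((e+2).choose (k+1) * (k+1)) * ((e+1) - k) := by ring
    _ = ((e+2) * ((e+1).choose k)) * ((e+1) - k) := by
        rw [← h1]
    _ = (e+2) * ((e+1).choose k * ((e+1) - k)) := by ring
    _ = (e+2) * (e.choose k * (e+1)) := by rw [← h2]
    _ = (e+2) * (e+1) * (e.choose k) := by ring

lemma aux_exp_term_tendsto (a : ℝ) :
    Tendsto (fun m : ℕ => (m:ℂ) * (Complex.exp (Complex.I * ((a / Real.sqrt m : ℝ) : ℂ))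
      - 1 - Complex.I * ((a / Real.sqrt m : ℝ) : ℂ))) atTop
      (nhds (-((a:ℂ)^2)/2)) := by
  rw [← tendsto_sub_nhds_zero_iff]
  apply squeeze_zero_norm' (a := fun m : ℕ => (2/9) * |a|^3 * (Real.sqrt m)⁻¹)
  · filter_upwards [eventually_ge_atTop 1,
      (tendsto_natCast_atTop_atTop (R := ℝ)).eventually_ge_atTop (a^2)] with m hm1 hm2
    set x : ℝ := a / Real.sqrt m with hx
    set z : ℂ := Complex.I * (x : ℂ) with hz
    have hm0 : (0:ℝ) < (m:ℝ) := by positivity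
    have hsq : Real.sqrt m > 0 := Real.sqrt_pos.mpr hm0
    have habs : ‖z‖ = |x| := by
      rw [hz, norm_mul, Complex.norm_I, Complex.norm_real, Real.norm_eq_abs, one_mul]
    have hxle : |x| ≤ 1 := by
      rw [hx, abs_div, abs_of_pos hsq, div_le_one hsq]
      calc |a| = Real.sqrt (a^2) := (Real.sqrt_sq_eq_abs a).symm
        _ ≤ Real.sqrt m := Real.sqrt_le_sqrt hm2
    have hz2 : z^2 = -((a:ℂ)^2) / (m:ℂ) := by
      rw [hz]
      have : ((x:ℂ))^2 = ((x^2 : ℝ) : ℂ) := by push_cast; ring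
      rw [mul_pow, Complex.I_sq, this, hx]
      rw [div_pow, Real.sq_sqrt hm0.le]
      push_cast
      ring
    have hmne : (m:ℂ) ≠ 0 := by
      exact_mod_cast Nat.cast_ne_zero.mpr (by omega)
    have hkey : (m:ℂ) * (Complex.exp z - 1 - z) - (-((a:ℂ)^2)/2)
        = (m:ℂ) * (Complex.exp z - (1 + z + z^2/2)) := by
      have : (m:ℂ) * (z^2/2) = -((a:ℂ)^2)/2 := by
        rw [hz2]; field_simp
      rw [← this]; ring
    rw [hkey]
    have hb := Complex.exp_bound (x := z) (by rw [habs]; exact hxle) (n := 3) (by norm_num)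
    have hsum : ∑ i ∈ Finset.range 3, z^i / (Nat.factorial i) = 1 + z + z^2/2 := by
      norm_num [Finset.sum_range_succ, Nat.factorial]
    rw [hsum] at hb
    rw [norm_mul, Complex.norm_natCast]
    calc (m:ℝ) * ‖Complex.exp z - (1 + z + z^2/2)‖
        ≤ (m:ℝ) * (|x|^3 * (2/9)) := by
          apply mul_le_mul_of_nonneg_left _ (Nat.cast_nonneg m)
          calc ‖Complex.exp z - (1 + z + z^2/2)‖
              ≤ ‖z‖ ^ 3 * ((3+1 : ℕ) * ((Nat.factorial 3 * 3 : ℕ) : ℝ)⁻¹) := by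
                convert hb using 2 <;> norm_num
            _ = |x|^3 * (2/9) := by rw [habs]; norm_num [Nat.factorial]
      _ = 2/9 * |a|^3 * (Real.sqrt m)⁻¹ := by
          rw [hx, abs_div, abs_of_pos hsq, div_pow]
          have h3 : Real.sqrt m ^ 3 = (m:ℝ) * Real.sqrt m := by
            rw [pow_succ, Real.sq_sqrt hm0.le]
          rw [h3]
          field_simp
  · have h1 : Tendsto (fun m : ℕ => (Real.sqrt m)⁻¹) atTop (nhds 0) := by
      have h2 : Tendsto (fun m : ℕ => Real.sqrt ((m:ℝ)⁻¹)) atTop (nhds 0) := by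
        have h3 : Tendsto (fun m : ℕ => Real.sqrt ((m:ℝ)⁻¹)) atTop (nhds (Real.sqrt 0)) :=
          (Real.continuous_sqrt.tendsto 0).comp (tendsto_inv_atTop_nhds_zero_nat (𝕜 := ℝ))
        rwa [Real.sqrt_zero] at h3
      refine h2.congr fun m => ?_
      rw [Real.sqrt_inv]
    have := h1.const_mul (2/9 * |a|^3)
    simpa [mul_assoc] using this

lemma aux_pow_tendsto {A g : ℕ → ℂ} {c : ℂ} (hg : Tendsto g atTop (nhds c))
    (hA : ∀ᶠ m in atTop, A m = 1 + g m / m) :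
    Tendsto (fun m => A m ^ m) atTop (nhds (Complex.exp c)) := by
  have hinv : Tendsto (fun m : ℕ => ((m:ℂ))⁻¹) atTop (nhds 0) := by
    have h := tendsto_inv_atTop_nhds_zero_nat (𝕜 := ℝ)
    have h2 : Tendsto (fun m : ℕ => (((m:ℝ)⁻¹ : ℝ) : ℂ)) atTop (nhds ((0:ℝ):ℂ)) :=
      (Complex.continuous_ofReal.tendsto 0).comp h
    simpa using h2.congr fun m => by push_cast; ring
  have hw : Tendsto (fun m : ℕ => g m / m) atTop (nhds 0) := by
    have := hg.mul hinv
    rw [mul_zero] at this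
    exact this.congr fun m => by rw [div_eq_mul_inv]
  have hgb : ∀ᶠ m in atTop, ‖g m‖ ≤ ‖c‖ + 1 := by
    filter_upwards [hg.norm.eventually_le_const (by linarith [norm_nonneg c] : ‖c‖ < ‖c‖ + 1)]
      with m hm using hm
  have hws : ∀ᶠ m in atTop, ‖g m / (m:ℂ)‖ ≤ 1/2 := by
    have h : ∀ᶠ w in nhds (0:ℂ), ‖w‖ ≤ 1/2 := by
      have := Metric.ball_mem_nhds (0:ℂ) (by norm_num : (0:ℝ) < 1/2)
      filter_upwards [this] with w hw
      simp only [Metric.mem_ball, dist_zero_right] at hw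
      linarith
    exact hw.eventually h
  have hlog : Tendsto (fun m : ℕ => (m:ℂ) * Complex.log (A m)) atTop (nhds c) := by
    have hrem : Tendsto (fun m : ℕ => (m:ℂ) * (Complex.log (1 + g m / m) - g m / m))
        atTop (nhds 0) := by
      apply squeeze_zero_norm' (a := fun m : ℕ => (‖c‖+1)^2 * ((m:ℝ))⁻¹)
      · filter_upwards [hws, hgb, eventually_ge_atTop 1] with m hwm hgm hm1
        have hm0 : (0:ℝ) < (m:ℝ) := by positivity
        set w : ℂ := g m / m with hwdef
        have hb := Complex.norm_log_one_add_sub_self_le (z := w) (by linarith : ‖w‖ < 1)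
        have hb2 : ‖Complex.log (1 + w) - w‖ ≤ ‖w‖^2 := by
          have h1 : (1 - ‖w‖)⁻¹ ≤ 2 := by
            rw [inv_le_comm₀ (by linarith) (by norm_num)]
            linarith
          calc ‖Complex.log (1 + w) - w‖ ≤ ‖w‖^2 * (1-‖w‖)⁻¹ / 2 := hb
            _ ≤ ‖w‖^2 * 2 / 2 := by
                apply div_le_div_of_nonneg_right _ (by norm_num)
                exact mul_le_mul_of_nonneg_left h1 (by positivity)
            _ = ‖w‖^2 := by ring
        rw [norm_mul, Complex.norm_natCast]
        have hwn : ‖w‖ = ‖g m‖ / m := by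
          rw [hwdef, norm_div, Complex.norm_natCast]
        calc (m:ℝ) * ‖Complex.log (1 + w) - w‖ ≤ (m:ℝ) * ‖w‖^2 :=
              mul_le_mul_of_nonneg_left hb2 hm0.le
          _ = ‖g m‖^2 * ((m:ℝ))⁻¹ := by
              rw [hwn]; field_simp
          _ ≤ (‖c‖+1)^2 * ((m:ℝ))⁻¹ := by
              apply mul_le_mul_of_nonneg_right _ (by positivity)
              exact pow_le_pow_left₀ (norm_nonneg _) hgm 2
      · simpa using (tendsto_inv_atTop_nhds_zero_nat (𝕜 := ℝ)).const_mul ((‖c‖+1)^2)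
    have heq : ∀ᶠ m : ℕ in atTop, (m:ℂ) * Complex.log (A m)
        = g m + (m:ℂ) * (Complex.log (1 + g m / m) - g m / m) := by
      filter_upwards [hA, eventually_ge_atTop 1] with m hAm hm1
      have hmne : (m:ℂ) ≠ 0 := Nat.cast_ne_zero.mpr (by omega)
      rw [hAm]
      field_simp
      ring
    rw [show c = c + 0 by ring]
    exact (hg.add hrem).congr' (heq.mono fun m hm => hm.symm)
  have hexp := (Complex.continuous_exp.tendsto c).comp hlog
  apply hexp.congr'
  filter_upwards [hA, hws, eventually_ge_atTop 1] with m hAm hwm hm1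
  have hAne : A m ≠ 0 := by
    rw [hAm]
    intro h
    have h2 : ‖(1 : ℂ)‖ ≤ ‖g m / m‖ := by
      have h3 : (1:ℂ) = -(g m / m) := by linear_combination h
      rw [h3, norm_neg]
    rw [norm_one] at h2
    linarith
  show Complex.exp ((m:ℂ) * Complex.log (A m)) = A m ^ m
  rw [Complex.exp_nat_mul, Complex.exp_log hAne]


/-- The unitary Hermite polynomial `H_d(z;t)`. -/
noncomputable def Hdpoly (d : ℕ) (t : ℝ) : Polynomial ℂ :=
  ∑ k ∈ Finset.range (d + 1),
    Polynomial.C ((-1) ^ k * (d.choose k : ℂ) *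
        ((Real.exp (-(t * (k : ℝ) * ((d : ℝ) - (k : ℝ)) / (2 * (d : ℝ))))) : ℂ)) *
      Polynomial.X ^ (d - k)

lemma aux_coeff_sumform (d : ℕ) (c : ℕ → ℂ) {i : ℕ} (hi : i ≤ d) :
    (∑ j ∈ Finset.range (d+1), Polynomial.C (c j) * Polynomial.X ^ (d-j)).coeff (d-i)
      = c i := by
  rw [Polynomial.finset_sum_coeff]
  simp_rw [Polynomial.coeff_C_mul, Polynomial.coeff_X_pow]
  rw [Finset.sum_eq_single_of_mem i (Finset.mem_range.mpr (by omega))]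
  · rw [if_pos rfl, mul_one]
  · intro j hj hne
    have hj' := Finset.mem_range.mp hj
    rw [if_neg, mul_zero]
    intro h
    exact hne (by omega)

lemma aux_coeff_sumform_high (d : ℕ) (c : ℕ → ℂ) {j : ℕ} (hj : d < j) :
    (∑ i ∈ Finset.range (d+1), Polynomial.C (c i) * Polynomial.X ^ (d-i)).coeff j = 0 := by
  rw [Polynomial.finset_sum_coeff]
  apply Finset.sum_eq_zero
  intro i hi
  rw [Polynomial.coeff_C_mul, Polynomial.coeff_X_pow, if_neg (by omega), mul_zero]

lemma aux_atilde_sumform (d : ℕ) (c : ℕ → ℂ) {i : ℕ} (hi : i ≤ d) :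
    atilde d (∑ j ∈ Finset.range (d+1), Polynomial.C (c j) * Polynomial.X ^ (d-j)) i
      = (-1)^i * ((d.choose i : ℂ))⁻¹ * c i := by
  rw [atilde, aux_coeff_sumform d c hi]

lemma aux_atilde_ffmul (d : ℕ) (p q : Polynomial ℂ) {i : ℕ} (hi : i ≤ d) :
    atilde d (ffmul d p q) i = atilde d p i * atilde d q i := by
  rw [ffmul, aux_atilde_sumform d _ hi]
  have hne : ((d.choose i : ℂ)) ≠ 0 := by
    exact_mod_cast Nat.cast_ne_zero.mpr (Nat.choose_pos hi).ne'
  have h1 : ((-1:ℂ))^i * (-1:ℂ)^i = 1 := by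
    rw [← pow_add]
    exact Even.neg_one_pow ⟨i, by ring⟩
  rw [show (-1:ℂ)^i * ((d.choose i : ℂ))⁻¹ * ((-1)^i * (d.choose i : ℂ) * atilde d p i * atilde d q i)
    = ((-1:ℂ)^i * (-1:ℂ)^i) * (((d.choose i : ℂ))⁻¹ * (d.choose i : ℂ)) * (atilde d p i * atilde d q i) by ring,
    h1, inv_mul_cancel₀ hne, one_mul, one_mul]

lemma aux_atilde_one_pow (d : ℕ) {i : ℕ} (hi : i ≤ d) :
    atilde d ((Polynomial.X - 1)^d) i = 1 := by
  have h : ((Polynomial.X - 1 : Polynomial ℂ))^d = (Polynomial.X + Polynomial.C (-1))^d := by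
    rw [map_neg, map_one, sub_eq_add_neg]
  rw [atilde, h, Polynomial.coeff_X_add_C_pow]
  have h2 : d - (d - i) = i := by omega
  rw [h2, Nat.choose_symm hi]
  have hne : ((d.choose i : ℂ)) ≠ 0 := by
    exact_mod_cast Nat.cast_ne_zero.mpr (Nat.choose_pos hi).ne'
  have h1 : ((-1:ℂ))^i * (-1:ℂ)^i = 1 := by
    rw [← pow_add]
    exact Even.neg_one_pow ⟨i, by ring⟩
  rw [show (-1:ℂ)^i * ((d.choose i : ℂ))⁻¹ * ((-1)^i * (d.choose i : ℂ))
    = ((-1:ℂ)^i * (-1:ℂ)^i) * (((d.choose i : ℂ))⁻¹ * (d.choose i : ℂ)) by ring,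
    h1, inv_mul_cancel₀ hne, one_mul]

lemma aux_atilde_ffpow (d : ℕ) (q : Polynomial ℂ) (m : ℕ) {i : ℕ} (hi : i ≤ d) :
    atilde d (ffpow d q m) i = (atilde d q i)^m := by
  induction m with
  | zero => rw [ffpow, pow_zero]; exact aux_atilde_one_pow d hi
  | succ n ih => rw [ffpow, aux_atilde_ffmul d _ _ hi, ih, pow_succ]

lemma aux_ffpow_eq_sumform (d : ℕ) (q : Polynomial ℂ) (m : ℕ) :
    ffpow d q (m+1) = ∑ i ∈ Finset.range (d+1),
      Polynomial.C ((-1) ^ i * (d.choose i : ℂ) * (atilde d q i)^(m+1)) *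
        Polynomial.X ^ (d - i) := by
  rw [show ffpow d q (m+1) = ffmul d (ffpow d q m) q from rfl, ffmul]
  refine Finset.sum_congr rfl fun i hi => ?_
  rw [aux_atilde_ffpow d q m (by simp only [Finset.mem_range] at hi; omega), pow_succ, mul_assoc]

lemma aux_atilde_prod (d : ℕ) (r : Fin d → ℂ) {k : ℕ} (hk : k ≤ d) :
    atilde d (∏ i, (Polynomial.X - Polynomial.C (r i))) k
      = ((d.choose k : ℂ))⁻¹ *
        ∑ t ∈ (Finset.univ : Finset (Fin d)).powersetCard k, ∏ i ∈ t, r i := by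
  have hcard : (Finset.univ : Finset (Fin d)).card = d := Finset.card_fin d
  have hrw : ∀ i : Fin d, Polynomial.X - Polynomial.C (r i)
      = Polynomial.X + Polynomial.C (-r i) := by
    intro i; rw [map_neg, sub_eq_add_neg]
  have h : d - k ≤ (Finset.univ : Finset (Fin d)).card := by omega
  rw [atilde, Finset.prod_congr rfl (fun i _ => hrw i), Finset.prod_X_add_C_coeff _ _ h]
  have h2 : (Finset.univ : Finset (Fin d)).card - (d - k) = k := by omega
  rw [h2]
  have h3 : ∀ t ∈ (Finset.univ : Finset (Fin d)).powersetCard k,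
      ∏ i ∈ t, (- r i) = (-1:ℂ)^k * ∏ i ∈ t, r i := by
    intro t ht
    have hc : t.card = k := (Finset.mem_powersetCard.mp ht).2
    calc ∏ i ∈ t, (-r i) = ∏ i ∈ t, ((-1:ℂ) * r i) := by
          refine Finset.prod_congr rfl fun i _ => by ring
      _ = (∏ _i ∈ t, (-1:ℂ)) * ∏ i ∈ t, r i := Finset.prod_mul_distrib
      _ = (-1:ℂ)^k * ∏ i ∈ t, r i := by rw [Finset.prod_const, hc]
  rw [Finset.sum_congr rfl h3, ← Finset.mul_sum]
  have h1 : ((-1:ℂ))^k * (-1:ℂ)^k = 1 := by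
    rw [← pow_add]; exact Even.neg_one_pow ⟨k, by ring⟩
  rw [show (-1:ℂ)^k * ((d.choose k:ℂ))⁻¹ * ((-1:ℂ)^k * ∑ t ∈ (Finset.univ : Finset (Fin d)).powersetCard k, ∏ i ∈ t, r i)
    = ((-1:ℂ)^k * (-1:ℂ)^k) * (((d.choose k:ℂ))⁻¹ * ∑ t ∈ (Finset.univ : Finset (Fin d)).powersetCard k, ∏ i ∈ t, r i) by ring, h1, one_mul]

theorem statement17 (d : ℕ) (hd : 2 ≤ d) (θ : Fin d → ℝ) (σ2 : ℝ)
    (hrange : ∀ k, θ k ∈ Set.Ico (-Real.pi) Real.pi)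
    (hmean : ∑ k, θ k = 0) (hvar : (∑ k, θ k ^ 2) / (d : ℝ) = σ2)
    (p : ℕ → Polynomial ℂ)
    (hp : ∀ m, p m = ∏ k, (Polynomial.X -
      Polynomial.C (Complex.exp (Complex.I * ((θ k / Real.sqrt (m : ℝ) : ℝ) : ℂ))))) :
    (∀ k ≤ d, Tendsto (fun m => atilde d (p m) k ^ m) atTop
        (nhds (((Real.exp (-((k : ℝ) * ((d : ℝ) - (k : ℝ)) * σ2 /
          (2 * ((d : ℝ) - 1)))) : ℝ) : ℂ)))) ∧
    (∀ j, Tendsto (fun m => (ffpow d (p m) m).coeff j) atTop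
        (nhds ((Hdpoly d ((d : ℝ) * σ2 / ((d : ℝ) - 1))).coeff j))) := by
  have hdR : (0:ℝ) < (d:ℝ) := by positivity
  have hd1R : (0:ℝ) < (d:ℝ) - 1 := by
    have : (2:ℝ) ≤ (d:ℝ) := by exact_mod_cast hd
    linarith
  -- Part 1
  have part1 : ∀ k ≤ d, Tendsto (fun m => atilde d (p m) k ^ m) atTop
      (nhds (((Real.exp (-((k : ℝ) * ((d : ℝ) - (k : ℝ)) * σ2 /
        (2 * ((d : ℝ) - 1)))) : ℝ) : ℂ))) := by
    intro k hk
    cases k with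
    | zero =>
      have hone : ∀ m, atilde d (p m) 0 = 1 := by
        intro m
        rw [hp m, aux_atilde_prod d _ (Nat.zero_le d)]
        simp [Finset.powersetCard_zero]
      have : (fun m => atilde d (p m) 0 ^ m) = fun _ => (1:ℂ) := by
        funext m; rw [hone m, one_pow]
      rw [this]
      norm_num
    | succ n =>
      set K := n + 1 with hKdef
      have hKd : K ≤ d := hk
      have hNpos : 0 < d.choose K := Nat.choose_pos hKd
      have hNneC : ((d.choose K : ℂ)) ≠ 0 := by exact_mod_cast hNpos.ne'
      have hNneR : ((d.choose K : ℝ)) ≠ 0 := by exact_mod_cast hNpos.ne'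
      set 𝒮 := (Finset.univ : Finset (Fin d)).powersetCard K with hSdef
      set Θ : Finset (Fin d) → ℝ := fun S => ∑ i ∈ S, θ i with hΘdef
      have hcardu : (Finset.univ : Finset (Fin d)).card = d := Finset.card_fin d
      have hsum1 : ∑ S ∈ 𝒮, Θ S = 0 := by
        rw [hSdef, hΘdef]
        rw [aux_sum_powersetCard_sum (Finset.univ : Finset (Fin d)) n θ, hmean, mul_zero]
      have hsum2 : ∑ S ∈ 𝒮, (Θ S)^2 = ((d - 2).choose n : ℝ) * ∑ j, (θ j)^2 := by
        rw [hSdef, hΘdef]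
        rw [aux_sum_powersetCard_sq (Finset.univ : Finset (Fin d)) n θ (by omega) hmean, hcardu]
      -- representation of atilde
      have hA : ∀ m : ℕ, atilde d (p m) K
          = ((d.choose K : ℂ))⁻¹ * ∑ S ∈ 𝒮, Complex.exp (Complex.I * ((Θ S / Real.sqrt m : ℝ) : ℂ)) := by
        intro m
        rw [hp m, aux_atilde_prod d _ hKd]
        congr 1
        refine Finset.sum_congr rfl fun t ht => ?_
        rw [← Complex.exp_sum]
        congr 1
        rw [← Finset.mul_sum]
        congr 1
        rw [← Complex.ofReal_sum]
        congr 1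
        rw [← Finset.sum_div]
      -- the auxiliary sequence g
      set g : ℕ → ℂ := fun m => ((d.choose K : ℂ))⁻¹ *
        ∑ S ∈ 𝒮, (m:ℂ) * (Complex.exp (Complex.I * ((Θ S / Real.sqrt m : ℝ) : ℂ))
          - 1 - Complex.I * ((Θ S / Real.sqrt m : ℝ) : ℂ)) with hgdef
      set c : ℂ := ((d.choose K : ℂ))⁻¹ * ∑ S ∈ 𝒮, (-(((Θ S : ℝ):ℂ))^2/2) with hcdef
      have hglim : Tendsto g atTop (nhds c) := by
        rw [hgdef, hcdef]
        apply Tendsto.const_mul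
        exact tendsto_finset_sum _ fun S _ => aux_exp_term_tendsto (Θ S)
      have hAg : ∀ᶠ m in atTop, atilde d (p m) K = 1 + g m / m := by
        filter_upwards [eventually_ge_atTop 1] with m hm1
        have hmne : (m:ℂ) ≠ 0 := Nat.cast_ne_zero.mpr (by omega)
        have hzsum : ∑ S ∈ 𝒮, (Complex.I * ((Θ S / Real.sqrt m : ℝ) : ℂ)) = 0 := by
          rw [← Finset.mul_sum, ← Complex.ofReal_sum, ← Finset.sum_div, hsum1]
          simp
        have hcards : (𝒮.card : ℂ) = (d.choose K : ℂ) := by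
          rw [hSdef, Finset.card_powersetCard, hcardu]
        have hgm : g m / m = ((d.choose K : ℂ))⁻¹ *
            ∑ S ∈ 𝒮, (Complex.exp (Complex.I * ((Θ S / Real.sqrt m : ℝ) : ℂ))
              - 1 - Complex.I * ((Θ S / Real.sqrt m : ℝ) : ℂ)) := by
          rw [hgdef]
          simp only []
          rw [← Finset.mul_sum, mul_div_assoc]
          congr 1
          rw [mul_comm ((m:ℂ)) _, mul_div_assoc, div_self hmne, mul_one]
        rw [hA m, hgm]
        rw [Finset.sum_sub_distrib, Finset.sum_sub_distrib, hzsum, sub_zero,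
          Finset.sum_const, nsmul_eq_mul, hcards, mul_sub, mul_one,
          inv_mul_cancel₀ hNneC]
        ring
      have hmain := aux_pow_tendsto hglim hAg
      -- identify the limit
      have hc : c = (((-(((d-2).choose n : ℝ) * (∑ j, (θ j)^2) / (d.choose K : ℝ) / 2)) : ℝ) : ℂ) := by
        rw [hcdef]
        have h4 : ∑ S ∈ 𝒮, (-(((Θ S : ℝ):ℂ))^2/2)
            = ((( - (∑ S ∈ 𝒮, (Θ S)^2) / 2 : ℝ)) : ℂ) := by
          push_cast
          simp [neg_div, Finset.sum_div, Finset.sum_neg_distrib]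
        rw [h4, hsum2]
        have hinv : ((d.choose K : ℂ))⁻¹ = (((d.choose K : ℝ)⁻¹ : ℝ) : ℂ) := by
          push_cast
          rfl
        rw [hinv, ← Complex.ofReal_mul]
        congr 1
        field_simp
      rw [hc] at hmain
      rw [← Complex.ofReal_exp] at hmain
      convert hmain using 4
      -- real identity
      have hid : (n+1) * ((d-1) - n) * (d.choose (n+1)) = d * (d-1) * ((d-2).choose n) := by
        obtain ⟨e, rfl⟩ : ∃ e, d = e + 2 := ⟨d - 2, by omega⟩
        simpa using aux_choose_id e n
      have hidR : ((n:ℝ)+1) * ((d:ℝ) - 1 - n) * (d.choose (n+1) : ℝ)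
          = (d:ℝ) * ((d:ℝ) - 1) * ((d-2).choose n : ℝ) := by
        have := hid
        have h1 : ((((d-1) - n : ℕ)) : ℝ) = (d:ℝ) - 1 - n := by
          have : n ≤ d - 1 := by omega
          push_cast [Nat.cast_sub this, Nat.cast_sub (show 1 ≤ d by omega)]
          ring
        calc ((n:ℝ)+1) * ((d:ℝ) - 1 - n) * (d.choose (n+1) : ℝ)
            = ((n:ℝ)+1) * ((((d-1) - n : ℕ)) : ℝ) * (d.choose (n+1) : ℝ) := by rw [h1]
          _ = (((n+1) * ((d-1) - n) * (d.choose (n+1)) : ℕ) : ℝ) := by push_cast; ring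
          _ = ((d * (d-1) * ((d-2).choose n) : ℕ) : ℝ) := by rw [hid]
          _ = (d:ℝ) * ((d:ℝ) - 1) * ((d-2).choose n : ℝ) := by
              push_cast [Nat.cast_sub (show 1 ≤ d by omega)]
              ring
      have hσ : σ2 = (∑ j, (θ j)^2) / d := hvar.symm
      rw [hσ]
      have hKR : ((K:ℕ):ℝ) = (n:ℝ) + 1 := by rw [hKdef]; push_cast; ring
      rw [hKR]
      have hdK : (d:ℝ) - ((n:ℝ)+1) = (d:ℝ) - 1 - n := by ring
      rw [hdK]
      field_simp
      linear_combination (-(∑ j, (θ j)^2)) * hidR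
  refine ⟨part1, ?_⟩
  -- Part 2
  intro j
  by_cases hj : j ≤ d
  · set K := d - j with hKdef
    have hKd : K ≤ d := by omega
    have hdj : d - K = j := by omega
    -- Hdpoly coefficient
    set t : ℝ := (d:ℝ) * σ2 / ((d:ℝ) - 1) with htdef
    have hH : (Hdpoly d t).coeff j
        = (-1)^K * (d.choose K : ℂ) *
          ((Real.exp (-(t * (K:ℝ) * ((d:ℝ) - (K:ℝ)) / (2 * (d:ℝ))))) : ℂ) := by
      rw [Hdpoly, ← hdj]
      exact aux_coeff_sumform d _ hKd
    have hexpeq : Real.exp (-(t * (K:ℝ) * ((d:ℝ) - (K:ℝ)) / (2 * (d:ℝ))))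
        = Real.exp (-((K:ℝ) * ((d:ℝ) - (K:ℝ)) * σ2 / (2 * ((d:ℝ) - 1)))) := by
      congr 1
      rw [htdef]
      field_simp
    have hlim := (part1 K hKd).const_mul ((-1:ℂ)^K * (d.choose K : ℂ))
    rw [hH, hexpeq]
    apply hlim.congr'
    filter_upwards [eventually_ge_atTop 1] with m hm1
    obtain ⟨m', rfl⟩ : ∃ m', m = m' + 1 := ⟨m - 1, by omega⟩
    rw [aux_ffpow_eq_sumform, ← hdj, aux_coeff_sumform d _ hKd]
  · -- j > d : both sides are zero
    have hH : (Hdpoly d ((d:ℝ) * σ2 / ((d:ℝ) - 1))).coeff j = 0 := by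
      rw [Hdpoly]
      exact aux_coeff_sumform_high d _ (by omega)
    rw [hH]
    apply Tendsto.congr' _ tendsto_const_nhds
    filter_upwards [eventually_ge_atTop 1] with m hm1
    obtain ⟨m', rfl⟩ : ∃ m', m = m' + 1 := ⟨m - 1, by omega⟩
    rw [aux_ffpow_eq_sumform]
    exact (aux_coeff_sumform_high d _ (by omega)).symm
end
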